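/- Let Λ ⊆ Λ' be A-lattices of rank r in L with K·Λ = K·Λ', let R ⊆ Λ' be a set of representatives of the classes of Λ'/Λ with 0 ∈ R, and let v ∈ K·Λ with v ∉ Λ'. Then Δ^{Λ'|Λ} · ∏_{w ∈ R} e^Λ(v + w) = e^{Λ'}(v), where Δ^{Λ'|Λ} := (∏_{0 ≠ w ∈ R} e^Λ(w))^{−1}; in particular the left-hand side is independent of the choice of R. -/

import Mathlib

open scoped Classical

noncomputable section

variable {Fq : Type*} [Field Fq] [Fintype Fq]
variable {L : Type*} [NormedField L] [CompleteSpace L]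
variable [Algebra (Polynomial Fq) L]

/-- `log_q |z|`. -/
def logq (q : ℕ) (z : L) : ℝ := Real.logb q ‖z‖

/-- An `A = 𝔽_q[T]`-lattice of rank `r` in `L`: a finitely generated `A`-submodule which is
free of rank `r` (equivalently: its `𝔽_q(T)`-span has dimension `r`), and which is
discrete in `L` (finite intersection with every bounded ball). -/
def IsLatticeOfRank (r : ℕ) (Λ : Submodule (Polynomial Fq) L) : Prop :=
  (∃ b : Fin r → L, LinearIndependent (Polynomial Fq) b ∧
      Submodule.span (Polynomial Fq) (Set.range b) = Λ) ∧
  ∀ B : ℝ, {x : L | x ∈ Λ ∧ ‖x‖ ≤ B}.Finite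

/-- Membership in `K·Λ`, the `K = 𝔽_q(T)`-span of `Λ` in `L`. -/
def InKSpan (Λ : Submodule (Polynomial Fq) L) (u : L) : Prop :=
  ∃ n : Polynomial Fq, n ≠ 0 ∧ n • u ∈ Λ

/-- The exponential function of the lattice `Λ`: `e^Λ(z) = z·∏_{0≠λ∈Λ} (1 - z/λ)`. -/
def latExp (Λ : Submodule (Polynomial Fq) L) (z : L) : L :=
  z * ∏' l : {x : L // x ∈ Λ ∧ x ≠ 0}, (1 - z / (l : L))

/-- `R` is a complete set of representatives for the classes of `Λ'` modulo `Λ`. -/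
def IsRepSet (Λ Λ' : Submodule (Polynomial Fq) L) (R : Finset L) : Prop :=
  (∀ w ∈ R, w ∈ Λ') ∧ ∀ y ∈ Λ', ∃! w, w ∈ R ∧ y - w ∈ Λ

/-- The discriminant `Δ^{Λ'|Λ} := (∏_{0 ≠ w ∈ Λ'/Λ} e^Λ(w))⁻¹`, computed via a choice of a
complete set of representatives containing `0` (the value is independent of this choice). -/
def latDisc (Λ Λ' : Submodule (Polynomial Fq) L) : L :=
  if h : ∃ R : Finset L, IsRepSet Λ Λ' R ∧ (0 : L) ∈ R then
    (∏ w ∈ h.choose.erase 0, latExp Λ w)⁻¹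
  else 1


set_option linter.unusedSectionVars false
set_option linter.unnecessarySimpa false
set_option linter.unusedVariables false
set_option maxHeartbeats 1000000

section AuxNA
variable {ι : Type*}

lemma na_norm_add_eq (hna : ∀ x y : L, ‖x + y‖ ≤ max ‖x‖ ‖y‖)
    {x y : L} (h : ‖y‖ < ‖x‖) : ‖x + y‖ = ‖x‖ := by
  refine le_antisymm ((hna x y).trans (max_le le_rfl h.le)) ?_
  by_contra hc
  push_neg at hc
  have h2 := hna (x + y) (-y)
  simp only [add_neg_cancel_right, norm_neg] at h2
  rcases max_cases ‖x + y‖ ‖y‖ with ⟨he, _⟩ | ⟨he, _⟩ <;> rw [he] at h2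
  · exact absurd (h2.trans_lt hc) (lt_irrefl _)
  · exact absurd (h2.trans_lt h) (lt_irrefl _)

lemma na_norm_le_one (hna : ∀ x y : L, ‖x + y‖ ≤ max ‖x‖ ‖y‖)
    {a : L} (h : ‖a - 1‖ ≤ 1) : ‖a‖ ≤ 1 := by
  have := hna (a - 1) 1
  simpa [max_le_iff, h] using this

lemma na_prod_sub_one (hna : ∀ x y : L, ‖x + y‖ ≤ max ‖x‖ ‖y‖)
    {δ : ℝ} (hδ0 : 0 ≤ δ) (hδ1 : δ ≤ 1)
    (s : Finset ι) (f : ι → L) (h : ∀ i ∈ s, ‖f i - 1‖ ≤ δ) :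
    ‖∏ i ∈ s, f i - 1‖ ≤ δ := by
  induction s using Finset.cons_induction with
  | empty => simpa using hδ0
  | cons a s ha ih =>
    rw [Finset.prod_cons]
    have hfa : ‖f a - 1‖ ≤ δ := h a (Finset.mem_cons_self _ _)
    have hP : ‖∏ i ∈ s, f i - 1‖ ≤ δ := ih fun i hi => h i (Finset.mem_cons_of_mem hi)
    have hb : ‖f a‖ ≤ 1 := na_norm_le_one hna (hfa.trans hδ1)
    have key : f a * ∏ i ∈ s, f i - 1 = f a * (∏ i ∈ s, f i - 1) + (f a - 1) := by ring
    rw [key]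
    refine (hna _ _).trans (max_le ?_ hfa)
    rw [norm_mul]
    calc ‖f a‖ * ‖∏ i ∈ s, f i - 1‖ ≤ 1 * δ := by
          exact mul_le_mul hb hP (norm_nonneg _) zero_le_one
      _ = δ := one_mul δ


lemma na_multipliable (hna : ∀ x y : L, ‖x + y‖ ≤ max ‖x‖ ‖y‖) {f : ι → L}
    (hf : ∀ ε : ℝ, 0 < ε → {i | ε ≤ ‖f i - 1‖}.Finite) : Multipliable f := by
  have hcs : CauchySeq (fun F : Finset ι => ∏ i ∈ F, f i) := by
    rw [Metric.cauchySeq_iff']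
    intro ε hε
    set S1 := (hf 1 one_pos).toFinset with hS1
    set C := ∏ i ∈ S1, max ‖f i‖ 1 with hC
    have hC0 : (0:ℝ) < C :=
      Finset.prod_pos fun i _ => lt_of_lt_of_le one_pos (le_max_right _ _)
    have hδpos : 0 < min 1 (ε / (2 * C)) := by positivity
    set δ := min 1 (ε / (2 * C)) with hδ
    refine ⟨S1 ∪ (hf δ hδpos).toFinset, fun F hF => ?_⟩
    set N := S1 ∪ (hf δ hδpos).toFinset with hN
    rw [dist_eq_norm, ← Finset.prod_sdiff hF]
    have h1 : (∏ i ∈ F \ N, f i) * ∏ i ∈ N, f i - ∏ i ∈ N, f i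
        = (∏ i ∈ N, f i) * (∏ i ∈ F \ N, f i - 1) := by ring
    rw [h1, norm_mul]
    have hPN : ‖∏ i ∈ N, f i‖ ≤ C := by
      rw [norm_prod]
      calc ∏ i ∈ N, ‖f i‖ ≤ ∏ i ∈ N, max ‖f i‖ 1 :=
            Finset.prod_le_prod (fun i _ => norm_nonneg _) (fun i _ => le_max_left _ _)
        _ = C := by
            rw [hC]
            refine (Finset.prod_subset (Finset.subset_union_left) fun i hiN hiS => ?_).symm
            have : ‖f i - 1‖ < 1 := by
              by_contra hc
              exact hiS (by simpa [hS1] using not_lt.mp hc)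
            exact max_eq_right (na_norm_le_one hna this.le)
    have htail : ‖∏ i ∈ F \ N, f i - 1‖ ≤ δ := by
      refine na_prod_sub_one hna hδpos.le (min_le_left _ _) _ _ fun i hi => ?_
      rcases Finset.mem_sdiff.mp hi with ⟨_, hiN⟩
      have : ¬ δ ≤ ‖f i - 1‖ := by
        intro hc
        exact hiN (Finset.mem_union_right _ (by simpa using hc))
      linarith [not_le.mp this]
    calc ‖∏ i ∈ N, f i‖ * ‖∏ i ∈ F \ N, f i - 1‖ ≤ C * δ := by
          refine mul_le_mul hPN htail (norm_nonneg _) hC0.le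
      _ ≤ C * (ε / (2 * C)) := by
          refine mul_le_mul_of_nonneg_left (min_le_right _ _) hC0.le
      _ = ε / 2 := by field_simp
      _ < ε := by linarith
  obtain ⟨a, ha⟩ := cauchySeq_tendsto_of_complete hcs
  exact ⟨a, ha⟩

lemma na_tprod_ne_zero {f : ι → L} (hm : Multipliable f) (h0 : ∀ i, f i ≠ 0)
    (h1 : {i | ‖f i‖ ≠ 1}.Finite) : (∏' i, f i) ≠ 0 := by
  set F0 := h1.toFinset with hF0
  have key : ∀ F : Finset ι, F0 ⊆ F → ∏ i ∈ F, ‖f i‖ = ∏ i ∈ F0, ‖f i‖ := by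
    intro F hF
    refine (Finset.prod_subset hF fun i _ hiF0 => ?_).symm
    by_contra hc
    exact hiF0 (by simpa [hF0] using hc)
  have h2 : Filter.Tendsto (fun F : Finset ι => ∏ i ∈ F, ‖f i‖) Filter.atTop
      (nhds ‖∏' i, f i‖) := hm.hasProd.norm
  have h3 : Filter.Tendsto (fun _ : Finset ι => ∏ i ∈ F0, ‖f i‖) Filter.atTop
      (nhds ‖∏' i, f i‖) := by
    refine h2.congr' ?_
    filter_upwards [Filter.eventually_ge_atTop F0] with F hF
    exact key F hF
  have h4 : ‖∏' i, f i‖ = ∏ i ∈ F0, ‖f i‖ := (tendsto_nhds_unique tendsto_const_nhds h3).symm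
  intro hc
  rw [hc, norm_zero] at h4
  exact (Finset.prod_ne_zero_iff.mpr fun i _ => norm_ne_zero_iff.mpr (h0 i)) h4.symm


/-- cofinite-one criterion for families `(a + x i)/(b + x i)`. -/
lemma na_family_cof (hna : ∀ x y : L, ‖x + y‖ ≤ max ‖x‖ ‖y‖) {x : ι → L}
    (hx : ∀ B : ℝ, {i | ‖x i‖ ≤ B}.Finite) (a b : L) :
    ∀ ε : ℝ, 0 < ε → {i | ε ≤ ‖(a + x i) / (b + x i) - 1‖}.Finite := by
  intro ε hε
  refine (hx (max ‖b‖ (‖a - b‖ / ε))).subset ?_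
  intro i hi
  simp only [Set.mem_setOf_eq] at hi ⊢
  by_contra hc
  push_neg at hc
  have hbx : ‖b + x i‖ = ‖x i‖ := by
    rw [add_comm]
    exact na_norm_add_eq hna (lt_of_le_of_lt (le_max_left _ _) hc)
  have hxpos : (0:ℝ) < ‖x i‖ := lt_of_le_of_lt (le_max_of_le_left (norm_nonneg b)) hc
  have hbx0 : b + x i ≠ 0 := by
    intro h0
    rw [h0, norm_zero] at hbx
    exact hxpos.ne (hbx)
  have hident : (a + x i) / (b + x i) - 1 = (a - b) / (b + x i) := by
    field_simp
    ring
  rw [hident, norm_div, hbx] at hi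
  have h2 : ‖a - b‖ / ε < ‖x i‖ := lt_of_le_of_lt (le_max_right _ _) hc
  have h3 : ‖a - b‖ < ε * ‖x i‖ := by
    rw [div_lt_iff₀ hε] at h2
    linarith [h2]
  have h4 : ε * ‖x i‖ ≤ ‖a - b‖ := by
    rw [le_div_iff₀ hxpos] at hi
    linarith [hi]
  linarith

lemma na_family_mult (hna : ∀ x y : L, ‖x + y‖ ≤ max ‖x‖ ‖y‖) {x : ι → L}
    (hx : ∀ B : ℝ, {i | ‖x i‖ ≤ B}.Finite) (a b : L) :
    Multipliable fun i => (a + x i) / (b + x i) :=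
  na_multipliable hna (na_family_cof hna hx a b)

lemma na_family_ne_zero (hna : ∀ x y : L, ‖x + y‖ ≤ max ‖x‖ ‖y‖) {x : ι → L}
    (hx : ∀ B : ℝ, {i | ‖x i‖ ≤ B}.Finite) (a b : L)
    (ha : ∀ i, a + x i ≠ 0) (hb : ∀ i, b + x i ≠ 0) :
    (∏' i, (a + x i) / (b + x i)) ≠ 0 := by
  refine na_tprod_ne_zero (na_family_mult hna hx a b)
    (fun i => div_ne_zero (ha i) (hb i)) ?_
  refine (hx (max ‖a‖ ‖b‖)).subset ?_
  intro i hi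
  simp only [Set.mem_setOf_eq] at hi ⊢
  by_contra hc
  push_neg at hc
  have h1 : ‖a + x i‖ = ‖x i‖ := by
    rw [add_comm]; exact na_norm_add_eq hna (lt_of_le_of_lt (le_max_left _ _) hc)
  have h2 : ‖b + x i‖ = ‖x i‖ := by
    rw [add_comm]; exact na_norm_add_eq hna (lt_of_le_of_lt (le_max_right _ _) hc)
  have hxpos : (0:ℝ) < ‖x i‖ := lt_of_le_of_lt (le_max_of_le_left (norm_nonneg a)) hc
  exact hi (by rw [norm_div, h1, h2, div_self hxpos.ne'])

/-- splitting off the point `0` from a product over a subtype of `L`. -/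
lemma na_tprod_split_zero (hna : ∀ x y : L, ‖x + y‖ ≤ max ‖x‖ ‖y‖)
    {p : L → Prop} (hp : p 0) (H : L → L)
    (hcof : ∀ ε : ℝ, 0 < ε → {m : {x : L // p x} | ε ≤ ‖H ↑m - 1‖}.Finite) :
    ∏' m : {x : L // p x}, H ↑m = H 0 * ∏' l : {x : L // p x ∧ x ≠ 0}, H ↑l := by
  have hup : Multipliable (Function.update (fun m : {x : L // p x} => H ↑m) ⟨0, hp⟩ 1) := by
    refine na_multipliable hna fun ε hε => ((hcof ε hε).insert ⟨0, hp⟩).subset ?_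
    intro m hm
    simp only [Set.mem_setOf_eq] at hm
    by_cases h : m = ⟨0, hp⟩
    · exact Set.mem_insert_iff.mpr (Or.inl h)
    · rw [Function.update_of_ne h] at hm
      exact Set.mem_insert_iff.mpr (Or.inr hm)
  rw [Multipliable.tprod_eq_mul_tprod_ite' (⟨0, hp⟩ : {x : L // p x}) hup]
  congr 1
  have hinj : Function.Injective
      (fun l : {x : L // p x ∧ x ≠ 0} => (⟨↑l, l.2.1⟩ : {x : L // p x})) := by
    intro a b hab
    exact Subtype.ext (by simpa using congrArg Subtype.val hab)
  have hsupp : Function.mulSupport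
      (fun m : {x : L // p x} => ite (m = ⟨0, hp⟩) 1 (H ↑m)) ⊆
      Set.range (fun l : {x : L // p x ∧ x ≠ 0} => (⟨↑l, l.2.1⟩ : {x : L // p x})) := by
    intro m hm
    by_cases h : m = ⟨0, hp⟩
    · simp [h] at hm
    · exact ⟨⟨↑m, m.2, fun h0 => h (Subtype.ext h0)⟩, rfl⟩
  rw [← Function.Injective.tprod_eq hinj hsupp]
  refine tprod_congr fun l => ?_
  have : (⟨↑l, l.2.1⟩ : {x : L // p x}) ≠ ⟨0, hp⟩ := by
    intro h
    exact l.2.2 (congrArg Subtype.val h)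
  simp [this]


end AuxNA

/-- symmetrized form of the lattice exponential. -/
lemma latExp_eq (N : Submodule (Polynomial Fq) L) (z : L) :
    latExp N z = z * ∏' l : {x : L // x ∈ N ∧ x ≠ 0}, (z + ↑l) / (0 + ↑l) := by
  unfold latExp
  congr 1
  rw [← Equiv.tprod_eq
    (⟨fun l => ⟨-↑l, N.neg_mem l.2.1, neg_ne_zero.mpr l.2.2⟩,
      fun l => ⟨-↑l, N.neg_mem l.2.1, neg_ne_zero.mpr l.2.2⟩,
      fun l => by ext; simp, fun l => by ext; simp⟩ :
      {x : L // x ∈ N ∧ x ≠ 0} ≃ {x : L // x ∈ N ∧ x ≠ 0})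
    (fun l => (z + ↑l) / (0 + ↑l))]
  refine tprod_congr fun l => ?_
  show 1 - z / ↑l = (z + -↑l) / (0 + -↑l)
  have h1 : (↑l : L) ≠ 0 := l.2.2
  rw [show z + -↑l = -(↑l - z) by ring, show (0:L) + -↑l = -↑l by ring,
    neg_div_neg_eq, sub_div, div_self h1]

/-- finiteness of the subtype balls, from the lattice ball condition. -/
lemma fin_subtype_ball {N : Submodule (Polynomial Fq) L}
    (hd : ∀ B : ℝ, {x : L | x ∈ N ∧ ‖x‖ ≤ B}.Finite) (B : ℝ) :
    {i : {x : L // x ∈ N ∧ x ≠ 0} | ‖(i : L)‖ ≤ B}.Finite := by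
  refine ((hd B).preimage (Subtype.val_injective.injOn)).subset ?_
  intro i hi
  exact ⟨i.2.1, hi⟩

lemma fin_subtype_ball' {N : Submodule (Polynomial Fq) L}
    (hd : ∀ B : ℝ, {x : L | x ∈ N ∧ ‖x‖ ≤ B}.Finite) (B : ℝ) :
    {i : {x : L // x ∈ N} | ‖(i : L)‖ ≤ B}.Finite := by
  refine ((hd B).preimage (Subtype.val_injective.injOn)).subset ?_
  intro i hi
  exact ⟨i.2, hi⟩

lemma fin_subtype_ball_shift {N : Submodule (Polynomial Fq) L}
    (hna : ∀ x y : L, ‖x + y‖ ≤ max ‖x‖ ‖y‖)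
    (hd : ∀ B : ℝ, {x : L | x ∈ N ∧ ‖x‖ ≤ B}.Finite) (w : L) (B : ℝ) :
    {m : {x : L // x ∈ N} | ‖w + (m : L)‖ ≤ B}.Finite := by
  refine (fin_subtype_ball' hd (max B ‖w‖)).subset ?_
  intro m hm
  simp only [Set.mem_setOf_eq] at hm ⊢
  have h1 : ‖(m : L)‖ ≤ max ‖w + ↑m‖ ‖w‖ := by
    have := hna (w + ↑m) (-w)
    simpa [add_comm] using this
  exact h1.trans (max_le_max hm le_rfl)

/-- Claim A: the coset factorization of `e^Λ(v+w)`. -/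
lemma claimA (hna : ∀ x y : L, ‖x + y‖ ≤ max ‖x‖ ‖y‖)
    (N : Submodule (Polynomial Fq) L)
    (hd : ∀ B : ℝ, {x : L | x ∈ N ∧ ‖x‖ ≤ B}.Finite)
    (v w : L) (hw0 : w ≠ 0) (hwN : w ∉ N) :
    latExp N (v + w) = latExp N w * ∏' m : {x : L // x ∈ N}, (v + w + ↑m) / (w + ↑m) := by
  have hw' : ∀ l : {x : L // x ∈ N ∧ x ≠ 0}, w + (l : L) ≠ 0 := by
    intro l h
    exact hwN ((eq_neg_of_add_eq_zero_left h) ▸ N.neg_mem l.2.1)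
  have hfT := fin_subtype_ball hd
  have hfM := fin_subtype_ball' hd
  rw [latExp_eq N (v + w), latExp_eq N w]
  have hsplit : ∏' m : {x : L // x ∈ N}, (v + w + ↑m) / (w + ↑m)
      = ((v + w + 0) / (w + 0)) * ∏' l : {x : L // x ∈ N ∧ x ≠ 0}, (v + w + ↑l) / (w + ↑l) :=
    na_tprod_split_zero hna N.zero_mem (fun μ => (v + w + μ) / (w + μ))
      (na_family_cof hna hfM (v + w) w)
  have hmul : ∏' l : {x : L // x ∈ N ∧ x ≠ 0}, (v + w + ↑l) / (0 + ↑l)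
      = (∏' l : {x : L // x ∈ N ∧ x ≠ 0}, (w + ↑l) / (0 + ↑l))
        * ∏' l : {x : L // x ∈ N ∧ x ≠ 0}, (v + w + ↑l) / (w + ↑l) := by
    rw [← Multipliable.tprod_mul (na_family_mult hna hfT w 0) (na_family_mult hna hfT (v + w) w)]
    refine tprod_congr fun l => ?_
    have h1 : (0:L) + ↑l ≠ 0 := by simpa using l.2.2
    have h2 : w + (l : L) ≠ 0 := hw' l
    rw [div_mul_div_comm, mul_comm ((0:L) + (l:L)) (w + (l:L)), mul_div_mul_left _ _ h2]
  rw [hmul, hsplit]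
  rw [show v + w + 0 = v + w by ring, show w + 0 = w by ring]
  set A := ∏' l : {x : L // x ∈ N ∧ x ≠ 0}, (w + ↑l) / (0 + ↑l)
  set B := ∏' l : {x : L // x ∈ N ∧ x ≠ 0}, (v + w + ↑l) / (w + ↑l)
  calc (v + w) * (A * B) = ((v + w) / w * w) * (A * B) := by rw [div_mul_cancel₀ _ hw0]
    _ = w * A * ((v + w) / w * B) := by ring

/-- the coset factor function. -/
def Gv (v : L) : L → L := fun μ => if μ = 0 then 1 else (v + μ) / (0 + μ)

lemma GvProd (hna : ∀ x y : L, ‖x + y‖ ≤ max ‖x‖ ‖y‖) {N : Submodule (Polynomial Fq) L}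
    (hd : ∀ B : ℝ, {x : L | x ∈ N ∧ ‖x‖ ≤ B}.Finite) (v : L) :
    ∏' m : {x : L // x ∈ N}, Gv v ↑m
      = ∏' l : {x : L // x ∈ N ∧ x ≠ 0}, (v + ↑l) / (0 + ↑l) := by
  have cof : ∀ ε : ℝ, 0 < ε → {m : {x : L // x ∈ N} | ε ≤ ‖Gv v ↑m - 1‖}.Finite := by
    intro ε hε
    refine (na_family_cof hna (fin_subtype_ball' hd) v 0 ε hε).subset ?_
    intro m hm
    simp only [Set.mem_setOf_eq] at hm ⊢
    by_cases h : (m : L) = 0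
    · simp [Gv, h] at hm; linarith
    · rwa [show Gv v ↑m = (v + ↑m) / (0 + ↑m) from if_neg h] at hm
  rw [na_tprod_split_zero hna N.zero_mem (Gv v) cof]
  rw [show Gv v 0 = 1 from if_pos rfl, one_mul]
  exact tprod_congr fun l => if_neg l.2.2

lemma claimD (hna : ∀ x y : L, ‖x + y‖ ≤ max ‖x‖ ‖y‖)
    {Λ Λ' : Submodule (Polynomial Fq) L}
    (hdΛ : ∀ B : ℝ, {x : L | x ∈ Λ ∧ ‖x‖ ≤ B}.Finite)
    (hdΛ' : ∀ B : ℝ, {x : L | x ∈ Λ' ∧ ‖x‖ ≤ B}.Finite)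
    (hle : Λ ≤ Λ') (R : Finset L) (hR : IsRepSet Λ Λ' R) (h0 : (0 : L) ∈ R)
    (hwnotΛ : ∀ w ∈ R.erase 0, w ∉ Λ) (v : L) :
    ∏' l : {x : L // x ∈ Λ' ∧ x ≠ 0}, (v + ↑l) / (0 + ↑l)
      = (∏' l : {x : L // x ∈ Λ ∧ x ≠ 0}, (v + ↑l) / (0 + ↑l))
        * ∏ w ∈ R.erase 0, ∏' m : {x : L // x ∈ Λ}, (v + w + ↑m) / (w + ↑m) := by
  have hRmem : ∀ w ∈ R, w ∈ Λ' := hR.1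
  -- cofinite criterion for shifted families
  have cofshift : ∀ w : L, ∀ ε : ℝ, 0 < ε →
      {m : {x : L // x ∈ Λ} | ε ≤ ‖Gv v (w + ↑m) - 1‖}.Finite := by
    intro w ε hε
    refine (na_family_cof hna (fin_subtype_ball_shift hna hdΛ w) v 0 ε hε).subset ?_
    intro m hm
    simp only [Set.mem_setOf_eq] at hm ⊢
    by_cases h : w + (m : L) = 0
    · simp [Gv, h] at hm; linarith
    · rwa [show Gv v (w + ↑m) = (v + (w + ↑m)) / (0 + (w + ↑m)) from if_neg h] at hm
  have cofM' : ∀ ε : ℝ, 0 < ε →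
      {m : {x : L // x ∈ Λ'} | ε ≤ ‖Gv v ↑m - 1‖}.Finite := by
    intro ε hε
    refine (na_family_cof hna (fin_subtype_ball' hdΛ') v 0 ε hε).subset ?_
    intro m hm
    simp only [Set.mem_setOf_eq] at hm ⊢
    by_cases h : (m : L) = 0
    · simp [Gv, h] at hm; linarith
    · rwa [show Gv v ↑m = (v + ↑m) / (0 + ↑m) from if_neg h] at hm
  -- the coset decomposition equivalence
  have hbij : Function.Bijective (fun p : Σ _w : {w // w ∈ R}, {x : L // x ∈ Λ} =>
      (⟨↑p.1 + ↑p.2, Λ'.add_mem (hRmem _ p.1.2) (hle p.2.2)⟩ : {x : L // x ∈ Λ'})) := by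
    constructor
    · rintro ⟨w, m⟩ ⟨w', m'⟩ hpq
      have hval : (w : L) + (m : L) = (w' : L) + (m' : L) := by
        simpa using congrArg Subtype.val hpq
      obtain ⟨u, -, huniq⟩ := hR.2 ((w : L) + (m : L)) (Λ'.add_mem (hRmem _ w.2) (hle m.2))
      have h1 : (w : L) = u := huniq _ ⟨w.2, by simpa using m.2⟩
      have h2 : (w' : L) = u := huniq _ ⟨w'.2, by rw [hval]; simpa using m'.2⟩
      have hww : w = w' := Subtype.ext (h1.trans h2.symm)
      subst hww
      have hmm : m = m' := Subtype.ext (by exact add_left_cancel hval)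
      rw [hmm]
    · rintro ⟨y, hy⟩
      obtain ⟨u, ⟨huR, huΛ⟩, -⟩ := hR.2 y hy
      exact ⟨⟨⟨u, huR⟩, ⟨y - u, huΛ⟩⟩, Subtype.ext (by simp)⟩
  set E := Equiv.ofBijective _ hbij with hE
  have multM' : Multipliable (fun m : {x : L // x ∈ Λ'} => Gv v ↑m) :=
    na_multipliable hna cofM'
  have hEq : ∏' p : (Σ _w : {w // w ∈ R}, {x : L // x ∈ Λ}), Gv v ↑(E p)
      = ∏' m : {x : L // x ∈ Λ'}, Gv v ↑m := Equiv.tprod_eq E (fun m : {x : L // x ∈ Λ'} => Gv v ↑m)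
  have hsig : ∏' p : (Σ _w : {w // w ∈ R}, {x : L // x ∈ Λ}), Gv v ↑(E p)
      = ∏' (b : {w // w ∈ R}) (c : {x : L // x ∈ Λ}), Gv v ↑(E ⟨b, c⟩) := by
    refine Multipliable.tprod_sigma' (fun b => ?_) (E.multipliable_iff.mpr multM')
    exact na_multipliable hna (cofshift (↑b))
  have hfin : ∏' (b : {w // w ∈ R}) (c : {x : L // x ∈ Λ}), Gv v ↑(E ⟨b, c⟩)
      = ∏ w ∈ R, ∏' c : {x : L // x ∈ Λ}, Gv v (w + ↑c) := by
    rw [tprod_fintype]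
    exact Finset.prod_coe_sort R (fun w => ∏' c : {x : L // x ∈ Λ}, Gv v (w + ↑c))
  have hsplitR : ∏ w ∈ R, ∏' c : {x : L // x ∈ Λ}, Gv v (w + ↑c)
      = (∏' c : {x : L // x ∈ Λ}, Gv v ((0 : L) + ↑c))
        * ∏ w ∈ R.erase 0, ∏' c : {x : L // x ∈ Λ}, Gv v (w + ↑c) :=
    (Finset.mul_prod_erase R _ h0).symm
  have h00 : ∏' c : {x : L // x ∈ Λ}, Gv v ((0 : L) + ↑c)
      = ∏' l : {x : L // x ∈ Λ ∧ x ≠ 0}, (v + ↑l) / (0 + ↑l) := by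
    rw [show (fun c : {x : L // x ∈ Λ} => Gv v ((0 : L) + ↑c))
        = fun c : {x : L // x ∈ Λ} => Gv v ↑c from funext fun c => by rw [zero_add]]
    exact GvProd hna hdΛ v
  have hw8 : ∀ w ∈ R.erase 0, ∏' c : {x : L // x ∈ Λ}, Gv v (w + ↑c)
      = ∏' m : {x : L // x ∈ Λ}, (v + w + ↑m) / (w + ↑m) := by
    intro w hw
    refine tprod_congr fun c => ?_
    have h2 : w + (c : L) ≠ 0 := fun h =>
      (hwnotΛ w hw) ((eq_neg_of_add_eq_zero_left h) ▸ Λ.neg_mem c.2)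
    rw [show Gv v (w + ↑c) = (v + (w + ↑c)) / (0 + (w + ↑c)) from if_neg h2]
    rw [zero_add, ← add_assoc]
  calc ∏' l : {x : L // x ∈ Λ' ∧ x ≠ 0}, (v + ↑l) / (0 + ↑l)
      = ∏' m : {x : L // x ∈ Λ'}, Gv v ↑m := (GvProd hna hdΛ' v).symm
    _ = ∏' p : (Σ _w : {w // w ∈ R}, {x : L // x ∈ Λ}), Gv v ↑(E p) := hEq.symm
    _ = ∏' (b : {w // w ∈ R}) (c : {x : L // x ∈ Λ}), Gv v ↑(E ⟨b, c⟩) := hsig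
    _ = ∏ w ∈ R, ∏' c : {x : L // x ∈ Λ}, Gv v (w + ↑c) := hfin
    _ = (∏' c : {x : L // x ∈ Λ}, Gv v ((0 : L) + ↑c))
        * ∏ w ∈ R.erase 0, ∏' c : {x : L // x ∈ Λ}, Gv v (w + ↑c) := hsplitR
    _ = (∏' l : {x : L // x ∈ Λ ∧ x ≠ 0}, (v + ↑l) / (0 + ↑l))
        * ∏ w ∈ R.erase 0, ∏' m : {x : L // x ∈ Λ}, (v + w + ↑m) / (w + ↑m) := by
        rw [h00]
        exact congrArg _ (Finset.prod_congr rfl hw8)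

/-- The distribution relation for division values: for a lattice pair
`Λ ⊆ Λ'` with `K·Λ = K·Λ'`, a complete set `R` of representatives of `Λ'/Λ` with `0 ∈ R`,
and `v ∈ K·Λ ∖ Λ'`, one has `Δ^{Λ'|Λ}·∏_{w ∈ R} e^Λ(v + w) = e^{Λ'}(v)`, where
`Δ^{Λ'|Λ} = (∏_{0 ≠ w ∈ R} e^Λ(w))⁻¹`. -/
theorem statement4
    (q : ℕ) (hq : Fintype.card Fq = q)
    (hna : ∀ x y : L, ‖x + y‖ ≤ max ‖x‖ ‖y‖)
    (hA : ∀ a : Polynomial Fq, a ≠ 0 →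
      ‖algebraMap (Polynomial Fq) L a‖ = (q : ℝ) ^ a.natDegree)
    (hval : ∀ x : L, x ≠ 0 → ∃ s : ℚ, ‖x‖ = (q : ℝ) ^ (s : ℝ))
    (r : ℕ)
    (Λ Λ' : Submodule (Polynomial Fq) L)
    (hΛ : IsLatticeOfRank r Λ) (hΛ' : IsLatticeOfRank r Λ') (hle : Λ ≤ Λ')
    (hKeq : ∀ u : L, InKSpan Λ u ↔ InKSpan Λ' u)
    (R : Finset L) (hR : IsRepSet Λ Λ' R) (h0 : (0 : L) ∈ R)
    (v : L) (hv : InKSpan Λ v) (hv' : v ∉ Λ') :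
    (∏ w ∈ R.erase 0, latExp Λ w)⁻¹ * ∏ w ∈ R, latExp Λ (v + w) = latExp Λ' v := by
  have hdΛ := hΛ.2
  have hdΛ' := hΛ'.2
  have hRmem : ∀ w ∈ R, w ∈ Λ' := hR.1
  have hwnotΛ : ∀ w ∈ R.erase 0, w ∉ Λ := by
    intro w hw hwΛ
    obtain ⟨hw0, hwR⟩ := Finset.mem_erase.mp hw
    obtain ⟨u, -, huniq⟩ := hR.2 w (hRmem w hwR)
    have h1 : w = u := huniq w ⟨hwR, by simpa using Λ.zero_mem⟩
    have h2 : (0 : L) = u := huniq 0 ⟨h0, by simpa using hwΛ⟩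
    exact hw0 (h1.trans h2.symm)
  have hfT := fin_subtype_ball (N := Λ) hdΛ
  -- nonvanishing of the discriminant factor
  have hDne : (∏ w ∈ R.erase 0, latExp Λ w) ≠ 0 := by
    rw [Finset.prod_ne_zero_iff]
    intro w hw
    obtain ⟨hw0', hwR⟩ := Finset.mem_erase.mp hw
    rw [latExp_eq]
    refine mul_ne_zero hw0' ?_
    refine na_family_ne_zero hna hfT w 0 ?_ ?_
    · intro l h
      exact (hwnotΛ w hw) ((eq_neg_of_add_eq_zero_left h) ▸ Λ.neg_mem l.2.1)
    · intro l
      simpa using l.2.2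
  have hprod : ∏ w ∈ R, latExp Λ (v + w)
      = latExp Λ v * ((∏ w ∈ R.erase 0, latExp Λ w)
          * ∏ w ∈ R.erase 0, ∏' m : {x : L // x ∈ Λ}, (v + w + ↑m) / (w + ↑m)) := by
    rw [← Finset.mul_prod_erase R _ h0, add_zero]
    rw [Finset.prod_congr rfl (fun w hw =>
      claimA hna Λ hdΛ v w (Finset.mem_erase.mp hw).1 (hwnotΛ w hw))]
    rw [Finset.prod_mul_distrib]
  rw [hprod, latExp_eq Λ v, latExp_eq Λ' v, claimD hna hdΛ hdΛ' hle R hR h0 hwnotΛ v]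
  set D := ∏ w ∈ R.erase 0, latExp Λ w
  set Q := ∏' l : {x : L // x ∈ Λ ∧ x ≠ 0}, (v + ↑l) / (0 + ↑l)
  set P := ∏ w ∈ R.erase 0, ∏' m : {x : L // x ∈ Λ}, (v + w + ↑m) / (w + ↑m)
  calc D⁻¹ * (v * Q * (D * P)) = (D⁻¹ * D) * (v * (Q * P)) := by ring
    _ = v * (Q * P) := by rw [inv_mul_cancel₀ hDne, one_mul]
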